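/- arXiv:math/0412132 — 3 statements merged into one kernel-verified Lean document; each statement's English description precedes it below -/
import Mathlib

section
/- Let K : ℝ → Matrix (Fin n) (Fin n) ℝ be a continuous family of skew-symmetric matrices, and let R : ℝ → Matrix (Fin n) (Fin n) ℝ solve the linear ODE R'(s) = - R(s) * K(s). If R(s₀) is an orthogonal matrix for some s₀, then R(s) is orthogonal for every s ∈ ℝ, i.e. R(s) * (R(s))ᵀ = 1 for all s. -/
open Matrix

/-- If `K` is a continuous family of skew-symmetric matrices and `R` solves the
linear ODE `R' = -R * K` with `R s₀` orthogonal at some `s₀`, then `R s` is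
orthogonal for every `s`. -/
theorem stmt_0 (n : ℕ) (K R : ℝ → Matrix (Fin n) (Fin n) ℝ)
    (hKcont : ∀ i j, Continuous fun s => K s i j)
    (hKskew : ∀ s, (K s)ᵀ = -(K s))
    (hR : ∀ s i j, HasDerivAt (fun t => R t i j) ((-(R s * K s)) i j) s)
    (s₀ : ℝ) (hR0 : R s₀ * (R s₀)ᵀ = 1) :
    ∀ s, R s * (R s)ᵀ = 1 := by
  intro s
  ext i j
  -- entrywise function
  have key : ∀ t : ℝ, HasDerivAt (fun u => (R u * (R u)ᵀ) i j) 0 t := by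
    intro t
    have h1 : HasDerivAt (fun u => ∑ k, R u i k * R u j k)
        (∑ k, ((-(R t * K t)) i k * R t j k + R t i k * (-(R t * K t)) j k)) t := by
      apply HasDerivAt.fun_sum
      intro k _
      exact (hR t i k).mul (hR t j k)
    have h2 : (∑ k, ((-(R t * K t)) i k * R t j k + R t i k * (-(R t * K t)) j k))
        = ((-(R t * K t)) * (R t)ᵀ + R t * (-(R t * K t))ᵀ) i j := by
      simp [Matrix.add_apply, Matrix.mul_apply, Matrix.transpose_apply,
        Finset.sum_add_distrib, mul_comm]
    have h3 : (-(R t * K t)) * (R t)ᵀ + R t * (-(R t * K t))ᵀ = 0 := by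
      have : (R t * K t)ᵀ = (K t)ᵀ * (R t)ᵀ := Matrix.transpose_mul _ _
      rw [Matrix.transpose_neg, this, hKskew]
      noncomm_ring
    have h4 : (fun u => (R u * (R u)ᵀ) i j) = fun u => ∑ k, R u i k * R u j k := by
      ext u; simp [Matrix.mul_apply, Matrix.transpose_apply]
    rw [h4]
    rw [h2, h3] at h1
    simpa using h1
  have hconst : (R s * (R s)ᵀ) i j = (R s₀ * (R s₀)ᵀ) i j := by
    have : ∀ x, (fun u => (R u * (R u)ᵀ) i j) x = (fun u => (R u * (R u)ᵀ) i j) s₀ := by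
      intro x
      exact is_const_of_deriv_eq_zero (fun y => (key y).differentiableAt)
        (fun y => (key y).deriv) x s₀
    exact this s
  rw [hconst, hR0]
end

section
/- Let K : ℝ → Matrix (Fin n) (Fin n) ℝ be a continuous family of matrices with trace zero, and let R : ℝ → Matrix (Fin n) (Fin n) ℝ solve R'(s) = - R(s) * K(s) with det(R(s₀)) = 1 for some s₀. Then det(R(s)) = 1 for all s ∈ ℝ. -/
open Matrix

lemma hasDerivAt_det_aux (n : ℕ) (A : ℝ → Matrix (Fin n) (Fin n) ℝ)
    (A' : Matrix (Fin n) (Fin n) ℝ) (s : ℝ)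
    (h : ∀ i j, HasDerivAt (fun t => A t i j) (A' i j) s) :
    HasDerivAt (fun t => (A t).det)
      (∑ j, ((A s).updateCol j (fun i => A' i j)).det) s := by
  have key : ∀ σ : Equiv.Perm (Fin n),
      HasDerivAt (fun t => ∏ i, A t (σ i) i)
        (∑ j, (∏ k ∈ Finset.univ.erase j, A s (σ k) k) • A' (σ j) j) s := by
    intro σ
    exact HasDerivAt.fun_finsetProd (fun i _ => h (σ i) i)
  have h1 : HasDerivAt (fun t => (A t).det)
      (∑ σ : Equiv.Perm (Fin n), (Equiv.Perm.sign σ : ℝ) *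
        ∑ j, (∏ k ∈ Finset.univ.erase j, A s (σ k) k) • A' (σ j) j) s := by
    have : ∀ t, (A t).det = ∑ σ : Equiv.Perm (Fin n),
        (Equiv.Perm.sign σ : ℝ) * ∏ i, A t (σ i) i := fun t => Matrix.det_apply' (A t)
    simp only [this]
    exact HasDerivAt.fun_sum (fun σ _ => (key σ).const_mul _)
  convert h1 using 1
  simp_rw [Finset.mul_sum]
  rw [Finset.sum_comm]
  refine Finset.sum_congr rfl fun j _ => ?_
  rw [Matrix.det_apply']
  refine Finset.sum_congr rfl fun σ _ => ?_
  congr 1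
  rw [smul_eq_mul, mul_comm, ← Finset.mul_prod_erase _ _ (Finset.mem_univ j)]
  rw [Matrix.updateCol_apply, if_pos rfl]
  refine congrArg _ (Finset.prod_congr rfl fun k hk => ?_)
  rw [Matrix.updateCol_apply, if_neg (Finset.ne_of_mem_erase hk)]

/-- Liouville's formula application: if `K` is a continuous family of traceless
matrices and `R` solves `R' = -R * K` with `det (R s₀) = 1`, then `det (R s) = 1`
for all `s`. -/
theorem stmt_1 (n : ℕ) (K R : ℝ → Matrix (Fin n) (Fin n) ℝ)
    (hKcont : ∀ i j, Continuous fun s => K s i j)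
    (hKtr : ∀ s, (K s).trace = 0)
    (hR : ∀ s i j, HasDerivAt (fun t => R t i j) ((-(R s * K s)) i j) s)
    (s₀ : ℝ) (hR0 : (R s₀).det = 1) :
    ∀ s, (R s).det = 1 := by
  have hdet : ∀ s, HasDerivAt (fun t => (R t).det) 0 s := by
    intro s
    have h := hasDerivAt_det_aux n R (-(R s * K s)) s (hR s)
    have heq : (∑ j, ((R s).updateCol j (fun i => (-(R s * K s)) i j)).det) = 0 := by
      have : ∀ j : Fin n,
          ((R s).updateCol j (fun i => (-(R s * K s)) i j)).det
            = (-(K s j j)) • (R s).det := by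
        intro j
        have hcol : (fun i => (-(R s * K s)) i j)
            = fun i => ∑ k, (-(K s k j)) • R s i k := by
          funext i
          simp [Matrix.mul_apply, Finset.sum_neg_distrib, mul_comm]
        rw [hcol]
        exact Matrix.det_updateCol_sum (R s) j (fun k => -(K s k j))
      have htr : ∑ j : Fin n, K s j j = 0 := hKtr s
      simp only [this, smul_eq_mul, ← Finset.sum_mul, Finset.sum_neg_distrib, htr,
        neg_zero, zero_mul]
    rwa [heq] at h
  have hconst : ∀ s, (R s).det = (R s₀).det := fun s =>
    is_const_of_deriv_eq_zero (f := fun t => (R t).det)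
      (fun t => (hdet t).differentiableAt) (fun t => (hdet t).deriv) s s₀
  intro s
  rw [hconst s, hR0]
end

section
/- Let e : ℝ → Fin d → ℝ^d be a C¹ orthonormal frame satisfying e_i' = ∑_j K_{ij} e_j with K skew-symmetric, and let R : ℝ → Matrix (Fin d) (Fin d) ℝ be differentiable with R' = -R·K and R(s) orthogonal. Define ẽ_i := ∑_j R_{ij} e_j. Then (ẽ_i(s)) is an orthonormal frame for every s, and if additionally the first row of R is (1,0,…,0) (so ẽ₁ = e₁ and K has the Frenet form with first row (0, κ₁, 0, …, 0)), then ẽ₁' = κ₁ e₂ and ẽ_μ' = -κ₁ R_{μ2} e₁ for μ ≥ 2. -/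
open Matrix

/-- The Tang frame. Let `e` be a `C¹` orthonormal frame with `e_i' = ∑_j K_{ij} e_j`,
`K` skew-symmetric, and let `R` be block diagonal (first row and column `(1,0,…,0)`),
orthogonal, whose lower block solves `R' = -R K` against the lower block of `K`.
Then `ẽ_i := ∑_j R_{ij} e_j` is an orthonormal frame; and if the first row of `K`
is `(0, κ₁, 0, …, 0)` then `ẽ₁' = κ₁ e₂` and `ẽ_μ' = -κ₁ R_{μ2} e₁` for `μ ≥ 2`. -/
theorem stmt_15 (d : ℕ) (hd : 2 ≤ d)
    (i0 i1 : Fin d) (hi0 : (i0 : ℕ) = 0) (hi1 : (i1 : ℕ) = 1)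
    (e : ℝ → Fin d → EuclideanSpace ℝ (Fin d))
    (K : ℝ → Matrix (Fin d) (Fin d) ℝ) (κ₁ : ℝ → ℝ)
    (R : ℝ → Matrix (Fin d) (Fin d) ℝ)
    (horth : ∀ s i j, (inner ℝ (e s i) (e s j) : ℝ) = if i = j then 1 else 0)
    (he : ∀ s i, HasDerivAt (fun t => e t i) (∑ j, K s i j • e s j) s)
    (hKskew : ∀ s, (K s)ᵀ = -(K s))
    (hKcont : ∀ i j, Continuous fun s => K s i j)
    (hRorth : ∀ s, R s ∈ Matrix.orthogonalGroup (Fin d) ℝ)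
    (hRrow : ∀ s j, R s i0 j = if j = i0 then 1 else 0)
    (hRcol : ∀ s j, R s j i0 = if j = i0 then 1 else 0)
    (hRode : ∀ s, ∀ μ ν : Fin d, μ ≠ i0 → ν ≠ i0 →
      HasDerivAt (fun t => R t μ ν) (-∑ ρ, R s μ ρ * K s ρ ν) s)
    (hKrow : ∀ s j, K s i0 j = if j = i1 then κ₁ s else 0) :
    (∀ s i j,
      (inner ℝ (∑ k, R s i k • e s k) (∑ k, R s j k • e s k) : ℝ) =
        if i = j then 1 else 0) ∧
    (∀ s, HasDerivAt (fun t => ∑ j, R t i0 j • e t j) (κ₁ s • e s i1) s) ∧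
    (∀ s, ∀ μ : Fin d, μ ≠ i0 →
      HasDerivAt (fun t => ∑ j, R t μ j • e t j)
        ((-(κ₁ s * R s μ i1)) • e s i0) s) := by
  refine ⟨?_, ?_, ?_⟩
  · intro s i j
    have hmul : R s * (R s)ᵀ = 1 := by
      have h := (Matrix.mem_orthogonalGroup_iff (Fin d) ℝ).mp (hRorth s)
      simpa [Matrix.star_eq_conjTranspose] using h
    have h1 : (inner ℝ (∑ k, R s i k • e s k) (∑ k, R s j k • e s k) : ℝ)
        = ∑ k, R s i k * R s j k := by
      rw [sum_inner]
      refine Finset.sum_congr rfl fun k _ => ?_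
      rw [inner_sum]
      rw [Finset.sum_eq_single k]
      · rw [real_inner_smul_left, real_inner_smul_right, horth]
        simp [mul_assoc]
      · intro l _ hl
        rw [real_inner_smul_left, real_inner_smul_right, horth]
        simp [hl.symm]
      · simp
    rw [h1]
    have := congrFun (congrFun hmul i) j
    simpa [Matrix.mul_apply, Matrix.one_apply] using this
  · intro s
    have hfun : (fun t => ∑ j, R t i0 j • e t j) = fun t => e t i0 := by
      funext t
      simp [hRrow, ite_smul]
    rw [hfun]
    have h := he s i0
    have : (∑ j, K s i0 j • e s j) = κ₁ s • e s i1 := by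
      simp [hKrow, ite_smul]
    rwa [this] at h
  · intro s μ hμ
    set D : Fin d → ℝ := fun j =>
      if j = i0 then 0 else -∑ ρ, R s μ ρ * K s ρ j with hD
    have hterm : ∀ j : Fin d, HasDerivAt (fun t => R t μ j • e t j)
        (R s μ j • (∑ k, K s j k • e s k) + D j • e s j) s := by
      intro j
      by_cases hj : j = i0
      · have hc : (fun t => R t μ j) = fun _ => (0 : ℝ) := by
          funext t; rw [hj]; simp [hRcol, hμ]
        have hR0 : HasDerivAt (fun t => R t μ j) 0 s := by
          rw [hc]; exact hasDerivAt_const _ _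
        have : HasDerivAt (fun t => R t μ j • e t j) _ s := hR0.smul (he s j)
        simpa [hD, hj] using this
      · have : HasDerivAt (fun t => R t μ j • e t j) _ s := (hRode s μ j hμ hj).smul (he s j)
        simpa [hD, hj] using this
    have hsum := HasDerivAt.fun_sum (u := Finset.univ) (fun j _ => hterm j)
    have key : (∑ j, (R s μ j • (∑ k, K s j k • e s k) + D j • e s j))
        = (-(κ₁ s * R s μ i1)) • e s i0 := by
      rw [Finset.sum_add_distrib]
      have h1 : (∑ j, R s μ j • (∑ k, K s j k • e s k))
          = ∑ k, (∑ j, R s μ j * K s j k) • e s k := by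
        simp_rw [Finset.smul_sum, smul_smul, Finset.sum_smul]
        rw [Finset.sum_comm]
      rw [h1, ← Finset.sum_add_distrib]
      have h2 : ∀ k : Fin d, (∑ j, R s μ j * K s j k) • e s k + D k • e s k
          = (if k = i0 then -(κ₁ s * R s μ i1) else 0) • e s k := by
        intro k
        rw [← add_smul]
        congr 1
        by_cases hk : k = i0
        · have hKcol : ∀ j : Fin d, K s j i0 = -(if j = i1 then κ₁ s else 0) := by
            intro j
            have h3 := congrFun (congrFun (hKskew s) i0) j
            simp only [Matrix.transpose_apply, Matrix.neg_apply] at h3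
            rw [h3, hKrow]
          rw [hk]
          simp only [hD, if_pos rfl, hKcol, mul_neg]
          simp [mul_ite, Finset.sum_ite_eq', mul_comm]
        · simp [hD, hk]
      simp_rw [h2]
      simp [Finset.sum_ite_eq']
    rw [key] at hsum
    exact hsum
end
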